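/- arXiv:1004.2027 — 2 statements merged into one kernel-verified Lean document; each statement's English description precedes it below -/
import Mathlib

section
/- Consider the approximate DPP iteration with parameter η > 0 started from Ψ_0 with ‖Ψ_0‖ ≤ V_max, with error functions ε_k and accumulated errors E_k = Σ_{j=0}^k ε_j, and define the auxiliary action-value functions by Q_0 = Ψ_0 and Q_k = ((k−1)/k) T^{π_{k−1}} Q_{k−1} + (1/k)(T^{π_{k−1}} Q_0 + E_{k−1}) for k ≥ 1, where π_k is the soft-max policy associated with Ψ_k. Then for every integer k ≥ 1: ‖Q* − Q_k‖ ≤ γ(4 V_max + log(L)/η)/((1−γ) k) + (1/k) Σ_{j=1}^{k} γ^{k−j} ‖E_{j−1}‖. -/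
open Finset Real Filter

variable {X A : Type*}

/-- `(πQ)(x) = Σ_a π(a|x) Q(x,a)`. -/
noncomputable def polApply [Fintype A] (pol : X → A → ℝ) (Q : X → A → ℝ) : X → ℝ :=
  fun x => ∑ a, pol x a * Q x a

/-- Bellman operator `T^π`. -/
noncomputable def bellman [Fintype X] [Fintype A]
    (P : X → A → X → ℝ) (r : X → A → ℝ) (γ : ℝ) (pol : X → A → ℝ)
    (Q : X → A → ℝ) : X → A → ℝ :=
  fun x a => r x a + γ * ∑ x', ∑ a', P x a x' * pol x' a' * Q x' a'

/-- Bellman optimality operator `T`. -/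
noncomputable def bellmanOpt [Fintype X] [Fintype A] [Nonempty A]
    (P : X → A → X → ℝ) (r : X → A → ℝ) (γ : ℝ) (Q : X → A → ℝ) : X → A → ℝ :=
  fun x a => r x a + γ * ∑ x', P x a x' * (Finset.univ.sup' Finset.univ_nonempty (Q x'))

/-- Soft-max policy associated with action preferences `Ψ` at inverse temperature `η`. -/
noncomputable def softmaxPol [Fintype A] (η : ℝ) (Ψ : X → A → ℝ) : X → A → ℝ :=
  fun x a => Real.exp (η * Ψ x a) / ∑ a', Real.exp (η * Ψ x a')

/-- Supremum norm over state-action pairs. -/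
noncomputable def supNorm [Fintype X] [Fintype A] [Nonempty X] [Nonempty A]
    (Q : X → A → ℝ) : ℝ :=
  Finset.univ.sup' Finset.univ_nonempty (fun p : X × A => |Q p.1 p.2|)



open Finset Real

section DPPAuxLemmas

lemma abs_sup'_le' {ι : Type*} [Fintype ι] [Nonempty ι] {f : ι → ℝ} {M : ℝ}
    (h : ∀ a, |f a| ≤ M) : |Finset.univ.sup' Finset.univ_nonempty f| ≤ M := by
  rw [abs_le]
  refine ⟨?_, Finset.sup'_le _ _ fun a _ => (abs_le.1 (h a)).2⟩
  obtain ⟨a⟩ := (inferInstance : Nonempty ι)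
  exact le_trans (abs_le.1 (h a)).1 (Finset.le_sup' f (Finset.mem_univ a))

lemma abs_sup'_sub_sup'_le' {ι : Type*} [Fintype ι] [Nonempty ι] (f g : ι → ℝ) {M : ℝ}
    (h : ∀ a, |f a - g a| ≤ M) :
    |Finset.univ.sup' Finset.univ_nonempty f - Finset.univ.sup' Finset.univ_nonempty g| ≤ M := by
  rw [abs_le]
  constructor
  · have hg : ∀ a ∈ Finset.univ, g a ≤ Finset.univ.sup' Finset.univ_nonempty f + M := by
      intro a _
      have h1 := (abs_le.1 (h a)).1
      have h2 := Finset.le_sup' f (Finset.mem_univ a)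
      linarith
    have := Finset.sup'_le Finset.univ_nonempty g hg
    linarith
  · have hf : ∀ a ∈ Finset.univ, f a ≤ Finset.univ.sup' Finset.univ_nonempty g + M := by
      intro a _
      have h1 := (abs_le.1 (h a)).2
      have h2 := Finset.le_sup' g (Finset.mem_univ a)
      linarith
    have := Finset.sup'_le Finset.univ_nonempty f hf
    linarith

lemma sup'_const_mul' {ι : Type*} [Fintype ι] [Nonempty ι] {c : ℝ} (hc : 0 ≤ c) (f : ι → ℝ) :
    Finset.univ.sup' Finset.univ_nonempty (fun a => c * f a)
      = c * Finset.univ.sup' Finset.univ_nonempty f := by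
  rw [show (fun a => c * f a) = (fun t => c * t) ∘ f from rfl,
    ← Finset.comp_sup'_eq_sup'_comp _ (fun t => c * t)]
  intro x y
  exact mul_max_of_nonneg x y hc

lemma sup'_add_const' {ι : Type*} [Fintype ι] [Nonempty ι] (c : ℝ) (f : ι → ℝ) :
    Finset.univ.sup' Finset.univ_nonempty (fun a => f a + c)
      = Finset.univ.sup' Finset.univ_nonempty f + c := by
  rw [show (fun a => f a + c) = (fun t => t + c) ∘ f from rfl,
    ← Finset.comp_sup'_eq_sup'_comp _ (fun t => t + c)]
  intro x y
  exact (max_add_add_right x y c).symm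

lemma weighted_sum_le' {ι : Type*} [Fintype ι] {w f : ι → ℝ} {M : ℝ}
    (hw : ∀ i, 0 ≤ w i) (hs : ∑ i, w i = 1) (hf : ∀ i, f i ≤ M) :
    ∑ i, w i * f i ≤ M := by
  calc ∑ i, w i * f i ≤ ∑ i, w i * M :=
        Finset.sum_le_sum fun i _ => mul_le_mul_of_nonneg_left (hf i) (hw i)
    _ = M := by rw [← Finset.sum_mul, hs, one_mul]

lemma le_weighted_sum' {ι : Type*} [Fintype ι] {w f : ι → ℝ} {m : ℝ}
    (hw : ∀ i, 0 ≤ w i) (hs : ∑ i, w i = 1) (hf : ∀ i, m ≤ f i) :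
    m ≤ ∑ i, w i * f i := by
  calc m = ∑ i, w i * m := by rw [← Finset.sum_mul, hs, one_mul]
    _ ≤ ∑ i, w i * f i :=
        Finset.sum_le_sum fun i _ => mul_le_mul_of_nonneg_left (hf i) (hw i)

lemma abs_weighted_sum_le' {ι : Type*} [Fintype ι] {w f : ι → ℝ} {M : ℝ}
    (hw : ∀ i, 0 ≤ w i) (hs : ∑ i, w i = 1) (hf : ∀ i, |f i| ≤ M) :
    |∑ i, w i * f i| ≤ M := by
  rw [abs_le]
  exact ⟨le_weighted_sum' hw hs fun i => (abs_le.1 (hf i)).1,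
    weighted_sum_le' hw hs fun i => (abs_le.1 (hf i)).2⟩

lemma negent_le_log_card' {ι : Type*} [Fintype ι] [Nonempty ι] (p : ι → ℝ)
    (hp : ∀ i, 0 < p i) (hs : ∑ i, p i = 1) :
    -∑ i, p i * Real.log (p i) ≤ Real.log (Fintype.card ι) := by
  have hL : (0:ℝ) < (Fintype.card ι : ℝ) := by exact_mod_cast Fintype.card_pos
  have key : ∀ i : ι, p i * (-(Real.log (Fintype.card ι) + Real.log (p i)))
      ≤ 1 / (Fintype.card ι : ℝ) - p i := by
    intro i
    have h1 : Real.log (1 / ((Fintype.card ι : ℝ) * p i))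
        ≤ 1 / ((Fintype.card ι : ℝ) * p i) - 1 :=
      Real.log_le_sub_one_of_pos (div_pos one_pos (mul_pos hL (hp i)))
    have h2 : Real.log (1 / ((Fintype.card ι : ℝ) * p i))
        = -(Real.log (Fintype.card ι) + Real.log (p i)) := by
      rw [one_div, Real.log_inv, Real.log_mul hL.ne' (hp i).ne']
    rw [h2] at h1
    have h3 := mul_le_mul_of_nonneg_left h1 (hp i).le
    calc p i * (-(Real.log (Fintype.card ι) + Real.log (p i)))
        ≤ p i * (1 / ((Fintype.card ι : ℝ) * p i) - 1) := h3
      _ = 1 / (Fintype.card ι : ℝ) - p i := by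
          have hpi := (hp i).ne'
          field_simp
  have hsum := Finset.sum_le_sum (fun i (_ : i ∈ Finset.univ) => key i)
  have hLHS : ∑ i, p i * (-(Real.log (Fintype.card ι) + Real.log (p i)))
      = -Real.log (Fintype.card ι) - ∑ i, p i * Real.log (p i) := by
    have : ∀ i : ι, p i * (-(Real.log (Fintype.card ι) + Real.log (p i)))
        = -(p i * Real.log (Fintype.card ι)) - p i * Real.log (p i) := by
      intro i; ring
    rw [Finset.sum_congr rfl fun i _ => this i, Finset.sum_sub_distrib,
      Finset.sum_neg_distrib, ← Finset.sum_mul, hs, one_mul]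
  have hRHS : ∑ i, (1 / (Fintype.card ι : ℝ) - p i) = 0 := by
    rw [Finset.sum_sub_distrib, Finset.sum_const, hs, Finset.card_univ, nsmul_eq_mul]
    field_simp
    ring
  rw [hLHS, hRHS] at hsum
  linarith

end DPPAuxLemmas

section SoftmaxLemmas

variable {X A : Type*}

lemma softmaxPol_nonneg' [Fintype A] (η : ℝ) (Ψ : X → A → ℝ) (x : X) (a : A) :
    0 ≤ softmaxPol η Ψ x a :=
  div_nonneg (Real.exp_nonneg _) (Finset.sum_nonneg fun _ _ => Real.exp_nonneg _)

lemma softmaxPol_pos' [Fintype A] [Nonempty A] (η : ℝ) (Ψ : X → A → ℝ) (x : X) (a : A) :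
    0 < softmaxPol η Ψ x a :=
  div_pos (Real.exp_pos _) (Finset.sum_pos (fun _ _ => Real.exp_pos _) Finset.univ_nonempty)

lemma softmaxPol_sum_one' [Fintype A] [Nonempty A] (η : ℝ) (Ψ : X → A → ℝ) (x : X) :
    ∑ a, softmaxPol η Ψ x a = 1 := by
  have h : 0 < ∑ a', Real.exp (η * Ψ x a') :=
    Finset.sum_pos (fun _ _ => Real.exp_pos _) Finset.univ_nonempty
  simp only [softmaxPol]
  rw [← Finset.sum_div, div_self h.ne']

lemma softmax_gap' [Fintype A] [Nonempty A] {η : ℝ} (hη : 0 < η) (Ψ : X → A → ℝ) (x : X) :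
    ∑ a, softmaxPol η Ψ x a * (Finset.univ.sup' Finset.univ_nonempty (Ψ x) - Ψ x a)
      ≤ Real.log (Fintype.card A) / η := by
  set p : A → ℝ := softmaxPol η Ψ x with hpdef
  set Z : ℝ := ∑ a', Real.exp (η * Ψ x a') with hZdef
  have hZ : 0 < Z := Finset.sum_pos (fun _ _ => Real.exp_pos _) Finset.univ_nonempty
  have hp : ∀ a, 0 < p a := softmaxPol_pos' η Ψ x
  have hs : ∑ a, p a = 1 := softmaxPol_sum_one' η Ψ x
  set m : ℝ := Finset.univ.sup' Finset.univ_nonempty (Ψ x) with hmdef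
  have hlog : ∀ a, Real.log (p a) = η * Ψ x a - Real.log Z := by
    intro a
    rw [hpdef]
    show Real.log (Real.exp (η * Ψ x a) / Z) = _
    rw [Real.log_div (Real.exp_pos _).ne' hZ.ne', Real.log_exp]
  have hZm : η * m ≤ Real.log Z := by
    obtain ⟨a0, _, ha0⟩ := Finset.exists_mem_eq_sup' Finset.univ_nonempty (Ψ x)
    have h1 : Real.exp (η * m) ≤ Z := by
      rw [hmdef, ha0]
      exact Finset.single_le_sum (fun a _ => (Real.exp_pos (η * Ψ x a)).le) (Finset.mem_univ a0)
    calc η * m = Real.log (Real.exp (η * m)) := (Real.log_exp _).symm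
      _ ≤ Real.log Z := Real.log_le_log (Real.exp_pos _) h1
  have key : η * (∑ a, p a * (m - Ψ x a)) ≤ Real.log (Fintype.card A) := by
    have e1 : η * (∑ a, p a * (m - Ψ x a)) = ∑ a, p a * (η * m - η * Ψ x a) := by
      rw [Finset.mul_sum]
      exact Finset.sum_congr rfl fun a _ => by ring
    have e2 : ∀ a, p a * (η * m - η * Ψ x a)
        = p a * (η * m) - p a * Real.log Z - p a * Real.log (p a) := by
      intro a
      have := hlog a
      have hΨa : η * Ψ x a = Real.log (p a) + Real.log Z := by linarith
      rw [hΨa]; ring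
    rw [e1, Finset.sum_congr rfl fun a _ => e2 a, Finset.sum_sub_distrib,
      Finset.sum_sub_distrib, ← Finset.sum_mul, ← Finset.sum_mul, hs, one_mul, one_mul]
    have hent := negent_le_log_card' p hp hs
    linarith
  rw [le_div_iff₀ hη]
  linarith [key]

end SoftmaxLemmas

/-- Lemma 4 of the paper: `ℓ∞`-norm bound on `Q* − Q_k` for the approximate DPP
auxiliary action-value functions. -/
theorem approx_dpp_auxiliary_error_bound
    {X A : Type*} [Fintype X] [Fintype A] [Nonempty X] [Nonempty A]
    (P : X → A → X → ℝ) (hP0 : ∀ x a x', 0 ≤ P x a x') (hP1 : ∀ x a, ∑ x', P x a x' = 1)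
    (r : X → A → ℝ) (Rmax : ℝ) (hR : 0 < Rmax) (hr : ∀ x a, |r x a| ≤ Rmax)
    (γ : ℝ) (hγ0 : 0 ≤ γ) (hγ1 : γ < 1)
    (Vmax : ℝ) (hV : Vmax = Rmax / (1 - γ))
    (η : ℝ) (hη : 0 < η)
    (ε : ℕ → X → A → ℝ)
    (E : ℕ → X → A → ℝ)
    (hE : ∀ k x a, E k x a = ∑ j ∈ Finset.range (k + 1), ε j x a)
    (Ψ : ℕ → X → A → ℝ) (hΨ0 : supNorm (Ψ 0) ≤ Vmax)
    (pol : ℕ → X → A → ℝ) (hpol : ∀ k, pol k = softmaxPol η (Ψ k))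
    (hΨ : ∀ k x a, Ψ (k + 1) x a =
      Ψ k x a + bellman P r γ (pol k) (Ψ k) x a - polApply (pol k) (Ψ k) x + ε k x a)
    (Qstar : X → A → ℝ) (hQstar : bellmanOpt P r γ Qstar = Qstar)
    (Q : ℕ → X → A → ℝ) (hQ0 : Q 0 = Ψ 0)
    (hQ : ∀ k : ℕ, ∀ x a, Q (k + 1) x a =
      ((k : ℝ) / (k + 1)) * bellman P r γ (pol k) (Q k) x a +
        (1 / ((k : ℝ) + 1)) * (bellman P r γ (pol k) (Q 0) x a + E k x a)) :
    ∀ k : ℕ, supNorm (fun x a => Qstar x a - Q (k + 1) x a) ≤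
      γ * (4 * Vmax + Real.log (Fintype.card A) / η) / ((1 - γ) * ((k : ℝ) + 1)) +
        (1 / ((k : ℝ) + 1)) *
          ∑ j ∈ Finset.range (k + 1), γ ^ (k - j) * supNorm (E j) := by
  classical
  have h1γ : (0:ℝ) < 1 - γ := by linarith
  have hA1 : (1:ℝ) ≤ (Fintype.card A : ℝ) := by exact_mod_cast Fintype.card_pos
  set Lη : ℝ := Real.log (Fintype.card A) / η with hLηdef
  have hLη0 : 0 ≤ Lη := div_nonneg (Real.log_nonneg hA1) hη.le
  have hVmax0 : 0 ≤ Vmax := by rw [hV]; positivity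
  have hpol0 : ∀ k x a, 0 ≤ pol k x a := fun k x a => by
    rw [hpol]; exact softmaxPol_nonneg' η (Ψ k) x a
  have hpol1 : ∀ k x, ∑ a, pol k x a = 1 := fun k x => by
    rw [hpol]; exact softmaxPol_sum_one' η (Ψ k) x
  have hQs : ∀ x a, Qstar x a
      = r x a + γ * ∑ x', P x a x' * Finset.univ.sup' Finset.univ_nonempty (Qstar x') := by
    intro x a
    conv_lhs => rw [← hQstar]
    rfl
  have habs : ∀ (F : X → A → ℝ) (x : X) (a : A), |F x a| ≤ supNorm F := fun F x a =>
    Finset.le_sup' (fun p : X × A => |F p.1 p.2|) (Finset.mem_univ (x, a))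
  have hsuple : ∀ (F : X → A → ℝ) (M : ℝ), (∀ x a, |F x a| ≤ M) → supNorm F ≤ M :=
    fun F M h => Finset.sup'_le _ _ fun p _ => h p.1 p.2
  -- ‖Q*‖ ≤ Vmax
  have hQsn : supNorm Qstar ≤ Vmax := by
    have h1 : ∀ x a, |Qstar x a| ≤ Rmax + γ * supNorm Qstar := by
      intro x a
      rw [hQs x a]
      have h2 : |∑ x', P x a x' * Finset.univ.sup' Finset.univ_nonempty (Qstar x')|
          ≤ supNorm Qstar :=
        abs_weighted_sum_le' (hP0 x a) (hP1 x a) fun x' =>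
          abs_sup'_le' fun a' => habs Qstar x' a'
      calc |r x a + γ * ∑ x', P x a x' * Finset.univ.sup' Finset.univ_nonempty (Qstar x')|
          ≤ |r x a| + |γ * ∑ x', P x a x' * Finset.univ.sup' Finset.univ_nonempty (Qstar x')| :=
            abs_add_le _ _
        _ ≤ Rmax + γ * supNorm Qstar := by
            rw [abs_mul, abs_of_nonneg hγ0]
            exact add_le_add (hr x a) (mul_le_mul_of_nonneg_left h2 hγ0)
    have h3 := hsuple Qstar _ h1
    have h4 : Vmax * (1 - γ) = Rmax := by rw [hV]; field_simp
    nlinarith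
  -- the cumulative soft-max baseline
  set S : ℕ → X → ℝ := fun k x => ∑ j ∈ Finset.range k, polApply (pol j) (Ψ j) x with hSdef
  have hSs : ∀ k x, S (k + 1) x = S k x + polApply (pol k) (Ψ k) x := by
    intro k x
    simp only [hSdef, Finset.sum_range_succ]
  have hbell : ∀ (po F : X → A → ℝ) (x : X) (a : A),
      bellman P r γ po F x a = r x a + γ * ∑ x', P x a x' * polApply po F x' := by
    intro po F x a
    have hinner : ∀ x', ∑ a', P x a x' * po x' a' * F x' a'
        = P x a x' * ∑ a', po x' a' * F x' a' := by
      intro x'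
      rw [Finset.mul_sum]
      exact Finset.sum_congr rfl fun a' _ => by ring
    simp only [bellman, polApply]
    rw [Finset.sum_congr rfl fun x' _ => hinner x']
  -- two key structural identities, proved by a joint induction
  have claim : ∀ k : ℕ,
      (∀ x a, Ψ k x a = Ψ 0 x a + (k:ℝ) * r x a
        + γ * (∑ x', P x a x' * S k x') - S k x + ∑ j ∈ Finset.range k, ε j x a)
      ∧ (∀ x a, (k:ℝ) * Q k x a = (k:ℝ) * r x a
        + γ * (∑ x', P x a x' * S k x') + ∑ j ∈ Finset.range k, ε j x a) := by
    intro k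
    induction k with
    | zero =>
        constructor <;> intro x a <;>
          simp [hSdef, polApply]
    | succ k ih =>
        obtain ⟨ih1, ih2⟩ := ih
        have hkey : ∀ x a, (k:ℝ) * Q k x a + Ψ 0 x a = Ψ k x a + S k x := by
          intro x a
          have e1 := ih1 x a
          have e2 := ih2 x a
          linarith
        have hPS : ∀ x a, ∑ x', P x a x' * S (k+1) x'
            = (∑ x', P x a x' * S k x')
              + ∑ x', P x a x' * polApply (pol k) (Ψ k) x' := by
          intro x a
          rw [← Finset.sum_add_distrib]
          exact Finset.sum_congr rfl fun x' _ => by rw [hSs]; ring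
        constructor
        · intro x a
          rw [hΨ k x a, hbell (pol k) (Ψ k) x a, ih1 x a,
            Finset.sum_range_succ, hSs k x, hPS x a]
          push_cast
          ring
        · intro x a
          have hk1 : ((k:ℝ) + 1) ≠ 0 := by positivity
          have e : ((k + 1 : ℕ) : ℝ) * Q (k+1) x a
              = (k:ℝ) * bellman P r γ (pol k) (Q k) x a
                + (bellman P r γ (pol k) (Q 0) x a + E k x a) := by
            rw [hQ k x a]
            push_cast
            field_simp
          have hcomb : ∀ x', (k:ℝ) * polApply (pol k) (Q k) x'
              + polApply (pol k) (Q 0) x' = S (k+1) x' := by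
            intro x'
            have e1 : (k:ℝ) * polApply (pol k) (Q k) x' + polApply (pol k) (Q 0) x'
                = ∑ a', pol k x' a' * ((k:ℝ) * Q k x' a' + Q 0 x' a') := by
              simp only [polApply, Finset.mul_sum, ← Finset.sum_add_distrib]
              exact Finset.sum_congr rfl fun a' _ => by ring
            rw [e1, hQ0]
            have e2 : ∀ a', pol k x' a' * ((k:ℝ) * Q k x' a' + Ψ 0 x' a')
                = pol k x' a' * Ψ k x' a' + pol k x' a' * S k x' := by
              intro a'
              rw [hkey x' a']
              ring
            rw [Finset.sum_congr rfl fun a' _ => e2 a', Finset.sum_add_distrib,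
              ← Finset.sum_mul, hpol1 k x', one_mul, hSs k x']
            simp only [polApply]
            ring
          have hsum2 : ∑ x', P x a x' * S (k+1) x'
              = (k:ℝ) * (∑ x', P x a x' * polApply (pol k) (Q k) x')
                + ∑ x', P x a x' * polApply (pol k) (Q 0) x' := by
            rw [Finset.mul_sum, ← Finset.sum_add_distrib]
            exact Finset.sum_congr rfl fun x' _ => by rw [← hcomb x']; ring
          rw [e, hE k x a, hbell (pol k) (Q k) x a, hbell (pol k) (Q 0) x a, hsum2]
          push_cast
          ring
  have key : ∀ (k : ℕ) (x : X) (a : A),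
      (k:ℝ) * Q k x a + Ψ 0 x a = Ψ k x a + S k x := by
    intro k x a
    have e1 := (claim k).1 x a
    have e2 := (claim k).2 x a
    linarith
  -- distance to Q*
  set d : ℕ → ℝ := fun k => supNorm (fun x a => Qstar x a - Q k x a) with hddef
  have hdk : ∀ k, d k = supNorm (fun x a => Qstar x a - Q k x a) := fun k => by rw [hddef]
  -- the central pointwise bound
  have hbound : ∀ (k : ℕ) (x' : X),
      |((k:ℝ)+1) * (Finset.univ.sup' Finset.univ_nonempty (Qstar x')) - S (k+1) x'|
        ≤ (k:ℝ) * d k + 2 * Vmax + Lη := by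
    intro k x'
    set m : ℝ := Finset.univ.sup' Finset.univ_nonempty (Qstar x') with hmdef
    set g : A → ℝ := fun a => (k:ℝ) * Q k x' a + Ψ 0 x' a with hgdef
    set mG : ℝ := Finset.univ.sup' Finset.univ_nonempty g with hmGdef
    have hgΨ : ∀ a, g a = Ψ k x' a + S k x' := fun a => key k x' a
    have hdiffbd : ∀ a, |((k:ℝ)+1) * Qstar x' a - g a| ≤ (k:ℝ) * d k + 2 * Vmax := by
      intro a
      have e1 : ((k:ℝ)+1) * Qstar x' a - g a
          = (k:ℝ) * (Qstar x' a - Q k x' a) + (Qstar x' a - Ψ 0 x' a) := by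
        rw [hgdef]; ring
      rw [e1]
      have h1 : |(k:ℝ) * (Qstar x' a - Q k x' a)| ≤ (k:ℝ) * d k := by
        rw [abs_mul, abs_of_nonneg (by positivity : (0:ℝ) ≤ (k:ℝ))]
        exact mul_le_mul_of_nonneg_left
          (le_of_le_of_eq (habs (fun x a => Qstar x a - Q k x a) x' a) (hdk k).symm)
          (by positivity)
      have h2 : |Qstar x' a - Ψ 0 x' a| ≤ 2 * Vmax := by
        calc |Qstar x' a - Ψ 0 x' a| ≤ |Qstar x' a| + |Ψ 0 x' a| := abs_sub _ _
          _ ≤ Vmax + Vmax := add_le_add (le_trans (habs Qstar x' a) hQsn)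
              (le_trans (habs (Ψ 0) x' a) hΨ0)
          _ = 2 * Vmax := by ring
      calc |(k:ℝ) * (Qstar x' a - Q k x' a) + (Qstar x' a - Ψ 0 x' a)|
          ≤ |(k:ℝ) * (Qstar x' a - Q k x' a)| + |Qstar x' a - Ψ 0 x' a| := abs_add_le _ _
        _ ≤ (k:ℝ) * d k + 2 * Vmax := add_le_add h1 h2
    have hmG1 : |((k:ℝ)+1) * m - mG| ≤ (k:ℝ) * d k + 2 * Vmax := by
      have e1 : ((k:ℝ)+1) * m
          = Finset.univ.sup' Finset.univ_nonempty (fun a => ((k:ℝ)+1) * Qstar x' a) := by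
        rw [hmdef]
        exact (sup'_const_mul' (by positivity : (0:ℝ) ≤ (k:ℝ)+1) (Qstar x')).symm
      rw [e1, hmGdef]
      exact abs_sup'_sub_sup'_le' _ _ hdiffbd
    have hmG2 : mG = Finset.univ.sup' Finset.univ_nonempty (Ψ k x') + S k x' := by
      rw [hmGdef, show g = fun a => Ψ k x' a + S k x' from funext hgΨ]
      exact sup'_add_const' _ _
    have hrep : ((k:ℝ)+1) * m - S (k+1) x'
        = ∑ a, pol k x' a * (((k:ℝ)+1) * m - g a) := by
      have e1 : ∀ a, pol k x' a * (((k:ℝ)+1) * m - g a)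
          = pol k x' a * (((k:ℝ)+1) * m) - pol k x' a * Ψ k x' a
            - pol k x' a * S k x' := by
        intro a
        rw [hgΨ a]; ring
      rw [Finset.sum_congr rfl fun a _ => e1 a, Finset.sum_sub_distrib,
        Finset.sum_sub_distrib, ← Finset.sum_mul, ← Finset.sum_mul, hpol1 k x',
        one_mul, one_mul, hSs k x']
      simp only [polApply]
      ring
    rw [hrep, abs_le]
    constructor
    · have hlow : ∀ a, -((k:ℝ) * d k + 2 * Vmax) ≤ ((k:ℝ)+1) * m - g a := by
        intro a
        have h1 : Qstar x' a ≤ m := Finset.le_sup' (Qstar x') (Finset.mem_univ a)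
        have h2 := (abs_le.1 (hdiffbd a)).1
        nlinarith [mul_nonneg (by positivity : (0:ℝ) ≤ (k:ℝ)+1) (sub_nonneg.mpr h1)]
      have := le_weighted_sum' (hpol0 k x') (hpol1 k x') hlow
      linarith
    · have e2 : ∑ a, pol k x' a * (((k:ℝ)+1) * m - g a)
          = (((k:ℝ)+1) * m - mG) + ∑ a, pol k x' a * (mG - g a) := by
        have e3 : ∀ a, pol k x' a * (((k:ℝ)+1) * m - g a)
            = pol k x' a * (((k:ℝ)+1) * m - mG) + pol k x' a * (mG - g a) := by
          intro a; ring
        rw [Finset.sum_congr rfl fun a _ => e3 a, Finset.sum_add_distrib,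
          ← Finset.sum_mul, hpol1 k x', one_mul]
      rw [e2]
      have h4 : ∑ a, pol k x' a * (mG - g a) ≤ Lη := by
        have e5 : ∀ a, mG - g a
            = Finset.univ.sup' Finset.univ_nonempty (Ψ k x') - Ψ k x' a := by
          intro a
          rw [hmG2, hgΨ a]; ring
        rw [Finset.sum_congr rfl fun a _ => by rw [e5 a], hLηdef]
        calc ∑ a, pol k x' a
              * (Finset.univ.sup' Finset.univ_nonempty (Ψ k x') - Ψ k x' a)
            = ∑ a, softmaxPol η (Ψ k) x' a
              * (Finset.univ.sup' Finset.univ_nonempty (Ψ k x') - Ψ k x' a) := by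
              rw [hpol]
          _ ≤ Real.log (Fintype.card A) / η := softmax_gap' hη (Ψ k) x'
      have h5 := (abs_le.1 hmG1).2
      linarith
  -- one step of the error recursion
  have hstep : ∀ k : ℕ,
      ((k:ℝ)+1) * d (k+1) ≤ γ * ((k:ℝ) * d k + 2 * Vmax + Lη) + supNorm (E k) := by
    intro k
    have hk1 : (0:ℝ) < (k:ℝ)+1 := by positivity
    set B : ℝ := γ * ((k:ℝ) * d k + 2 * Vmax + Lη) + supNorm (E k) with hBdef
    have hpt : ∀ x a, |Qstar x a - Q (k+1) x a| ≤ B / ((k:ℝ)+1) := by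
      intro x a
      have eQ := (claim (k+1)).2 x a
      push_cast at eQ
      rw [← hE k x a] at eQ
      have hdist : ∑ x', P x a x'
            * (((k:ℝ)+1) * (Finset.univ.sup' Finset.univ_nonempty (Qstar x')) - S (k+1) x')
          = ((k:ℝ)+1) * (∑ x', P x a x' * Finset.univ.sup' Finset.univ_nonempty (Qstar x'))
            - ∑ x', P x a x' * S (k+1) x' := by
        rw [Finset.mul_sum, ← Finset.sum_sub_distrib]
        exact Finset.sum_congr rfl fun x' _ => by ring
      have e1 : ((k:ℝ)+1) * (Qstar x a - Q (k+1) x a)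
          = γ * (∑ x', P x a x'
              * (((k:ℝ)+1) * (Finset.univ.sup' Finset.univ_nonempty (Qstar x'))
                - S (k+1) x'))
            - E k x a := by
        rw [hdist]
        have e2 : ((k:ℝ)+1) * Qstar x a = ((k:ℝ)+1) * r x a
            + γ * (((k:ℝ)+1)
              * ∑ x', P x a x' * Finset.univ.sup' Finset.univ_nonempty (Qstar x')) := by
          rw [hQs x a]; ring
        have e3 : ((k:ℝ)+1) * (Qstar x a - Q (k+1) x a)
            = ((k:ℝ)+1) * Qstar x a - ((k:ℝ)+1) * Q (k+1) x a := by ring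
        rw [e3, eQ, e2]
        ring
      have h2 : |((k:ℝ)+1) * (Qstar x a - Q (k+1) x a)| ≤ B := by
        rw [e1]
        have h3 : |∑ x', P x a x'
            * (((k:ℝ)+1) * (Finset.univ.sup' Finset.univ_nonempty (Qstar x'))
              - S (k+1) x')| ≤ (k:ℝ) * d k + 2 * Vmax + Lη :=
          abs_weighted_sum_le' (hP0 x a) (hP1 x a) fun x' => hbound k x'
        calc |γ * (∑ x', P x a x'
              * (((k:ℝ)+1) * (Finset.univ.sup' Finset.univ_nonempty (Qstar x'))
                - S (k+1) x')) - E k x a|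
            ≤ |γ * (∑ x', P x a x'
              * (((k:ℝ)+1) * (Finset.univ.sup' Finset.univ_nonempty (Qstar x'))
                - S (k+1) x'))| + |E k x a| := abs_sub _ _
          _ ≤ γ * ((k:ℝ) * d k + 2 * Vmax + Lη) + supNorm (E k) := by
              rw [abs_mul, abs_of_nonneg hγ0]
              exact add_le_add (mul_le_mul_of_nonneg_left h3 hγ0) (habs (E k) x a)
      rw [abs_mul, abs_of_pos hk1] at h2
      rw [le_div_iff₀ hk1]
      linarith
    have h6 : d (k+1) ≤ B / ((k:ℝ)+1) := by
      rw [hdk (k+1)]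
      exact hsuple (fun x a => Qstar x a - Q (k+1) x a) _ hpt
    calc ((k:ℝ)+1) * d (k+1) ≤ ((k:ℝ)+1) * (B / ((k:ℝ)+1)) :=
          mul_le_mul_of_nonneg_left h6 hk1.le
      _ = B := by field_simp
  -- solve the recursion
  set c0 : ℝ := 2 * Vmax + Lη with hc0def
  have hc00 : 0 ≤ c0 := by rw [hc0def]; linarith
  have hG : ∀ k : ℕ, ((k:ℝ)+1) * d (k+1)
      ≤ γ * c0 / (1 - γ) + ∑ j ∈ Finset.range (k + 1), γ ^ (k - j) * supNorm (E j) := by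
    intro k
    induction k with
    | zero =>
        have h1 := hstep 0
        have h2 : γ * c0 ≤ γ * c0 / (1 - γ) := by
          rw [le_div_iff₀ h1γ]
          nlinarith [mul_nonneg (mul_nonneg hγ0 hc00) hγ0]
        simp only [Nat.cast_zero, zero_add, zero_mul, one_mul, Finset.sum_range_one,
          Nat.sub_self, pow_zero] at h1 ⊢
        rw [hc0def] at h2
        linarith
    | succ k ih =>
        have hs := hstep (k+1)
        push_cast at hs ⊢
        have hsum : ∑ j ∈ Finset.range (k+1+1), γ ^ ((k+1) - j) * supNorm (E j)
            = γ * (∑ j ∈ Finset.range (k+1), γ ^ (k - j) * supNorm (E j))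
              + supNorm (E (k+1)) := by
          rw [Finset.sum_range_succ, Nat.sub_self, pow_zero, one_mul, Finset.mul_sum]
          congr 1
          refine Finset.sum_congr rfl fun j hj => ?_
          have hjk : j ≤ k := Nat.lt_succ_iff.mp (Finset.mem_range.mp hj)
          rw [show (k+1) - j = (k-j) + 1 from by omega, pow_succ]
          ring
        have hmul : γ * (((k:ℝ)+1) * d (k+1) + 2 * Vmax + Lη)
            ≤ γ * ((γ * c0 / (1-γ)
                + ∑ j ∈ Finset.range (k+1), γ ^ (k - j) * supNorm (E j)) + c0) := by
          apply mul_le_mul_of_nonneg_left _ hγ0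
          rw [hc0def]
          have := ih
          linarith
        calc ((k:ℝ)+1+1) * d (k+1+1)
            ≤ γ * (((k:ℝ)+1) * d (k+1) + 2 * Vmax + Lη) + supNorm (E (k+1)) := hs
          _ ≤ γ * ((γ * c0 / (1-γ)
                + ∑ j ∈ Finset.range (k+1), γ ^ (k - j) * supNorm (E j)) + c0)
              + supNorm (E (k+1)) := by linarith
          _ = γ * c0 / (1-γ)
              + (γ * (∑ j ∈ Finset.range (k+1), γ ^ (k - j) * supNorm (E j))
                + supNorm (E (k+1))) := by
              field_simp
              ring
          _ = γ * c0 / (1-γ)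
              + ∑ j ∈ Finset.range (k+1+1), γ ^ ((k+1) - j) * supNorm (E j) := by
              rw [hsum]
    -- final conclusion
  intro k
  have hGk := hG k
  have hk1 : (0:ℝ) < (k:ℝ)+1 := by positivity
  have hd1 : d (k+1) ≤ (γ * c0 / (1-γ)
      + ∑ j ∈ Finset.range (k+1), γ ^ (k - j) * supNorm (E j)) / ((k:ℝ)+1) := by
    rw [le_div_iff₀ hk1]
    calc d (k+1) * ((k:ℝ)+1) = ((k:ℝ)+1) * d (k+1) := by ring
      _ ≤ _ := hGk
  have hnum : γ * c0 ≤ γ * (4 * Vmax + Lη) := by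
    apply mul_le_mul_of_nonneg_left _ hγ0
    rw [hc0def]
    linarith
  have hD : (0:ℝ) < (1-γ) * ((k:ℝ)+1) := mul_pos h1γ hk1
  calc supNorm (fun x a => Qstar x a - Q (k+1) x a) = d (k+1) := (hdk (k+1)).symm
    _ ≤ (γ * c0 / (1-γ)
        + ∑ j ∈ Finset.range (k+1), γ ^ (k - j) * supNorm (E j)) / ((k:ℝ)+1) := hd1
    _ = γ * c0 / ((1-γ) * ((k:ℝ)+1))
        + (1/((k:ℝ)+1)) * ∑ j ∈ Finset.range (k+1), γ ^ (k - j) * supNorm (E j) := by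
        have hne1 : ((k:ℝ)+1) ≠ 0 := hk1.ne'
        have hne2 : (1-γ) ≠ 0 := h1γ.ne'
        field_simp
    _ ≤ γ * (4 * Vmax + Lη) / ((1-γ) * ((k:ℝ)+1))
        + (1/((k:ℝ)+1)) * ∑ j ∈ Finset.range (k+1), γ ^ (k - j) * supNorm (E j) := by
        apply add_le_add_left
        have hmono := mul_le_mul_of_nonneg_right hnum (le_of_lt (inv_pos.mpr hD))
        calc γ * c0 / ((1-γ) * ((k:ℝ)+1))
            = γ * c0 * (((1-γ) * ((k:ℝ)+1))⁻¹) := div_eq_mul_inv _ _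
          _ ≤ γ * (4 * Vmax + Lη) * (((1-γ) * ((k:ℝ)+1))⁻¹) := hmono
          _ = γ * (4 * Vmax + Lη) / ((1-γ) * ((k:ℝ)+1)) := (div_eq_mul_inv _ _).symm
end

section
/- On a probability space, let (ε_k)_{k≥0} be an i.i.d. sequence of random functions ε_k : X×A → ℝ with E[ε_k(x,a)] = 0 and |ε_k(x,a)| ≤ U almost surely for some finite U > 0 and all (x,a). Fix η > 0 and Ψ_0 with ‖Ψ_0‖ ≤ V_max, and define the random approximate DPP iterates by Ψ_{k+1}(x,a) = Ψ_k(x,a) + (T^{π_k} Ψ_k)(x,a) − (π_k Ψ_k)(x) + ε_k(x,a), where π_k is the soft-max policy associated with Ψ_k. Then, with probability 1, limsup_{k→∞} ‖Q* − Q^{π_k}‖ = 0. -/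
open Finset Real Filter

variable {X A : Type*}

open Topology

set_option linter.unusedSectionVars false

section helpers
variable {A : Type*} [Fintype A] [Nonempty A]

lemma mySup'_le_add (f g : A → ℝ) (c : ℝ) (h : ∀ a, f a ≤ g a + c) :
    univ.sup' univ_nonempty f ≤ univ.sup' univ_nonempty g + c := by
  apply Finset.sup'_le
  intro a _
  exact (h a).trans (by gcongr; exact Finset.le_sup' g (mem_univ a))

lemma mySup'_abs_sub (f g : A → ℝ) (c : ℝ) (h : ∀ a, |f a - g a| ≤ c) :
    |univ.sup' univ_nonempty f - univ.sup' univ_nonempty g| ≤ c := by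
  rw [abs_le]
  constructor
  · have := mySup'_le_add g f c (fun a => by have := (abs_le.1 (h a)).1; linarith)
    linarith
  · have := mySup'_le_add f g c (fun a => by have := (abs_le.1 (h a)).2; linarith)
    linarith

lemma mySup'_mul (c : ℝ) (hc : 0 ≤ c) (f : A → ℝ) :
    univ.sup' univ_nonempty (fun a => c * f a) = c * univ.sup' univ_nonempty f := by
  apply le_antisymm
  · apply Finset.sup'_le
    intro a _
    exact mul_le_mul_of_nonneg_left (Finset.le_sup' f (mem_univ a)) hc
  · obtain ⟨a, -, ha⟩ := Finset.exists_mem_eq_sup' (univ_nonempty (α := A)) f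
    rw [ha]
    exact Finset.le_sup' (fun a => c * f a) (mem_univ a)

lemma mySup'_sub_const (f : A → ℝ) (c : ℝ) :
    univ.sup' univ_nonempty (fun a => f a - c) = univ.sup' univ_nonempty f - c := by
  apply le_antisymm
  · apply Finset.sup'_le
    intro a _
    have := Finset.le_sup' f (mem_univ a)
    linarith
  · obtain ⟨a, -, ha⟩ := Finset.exists_mem_eq_sup' (univ_nonempty (α := A)) f
    rw [ha, sub_le_iff_le_add]
    have := Finset.le_sup' (fun a => f a - c) (mem_univ a)
    linarith

lemma myWsum_abs_le (p h : A → ℝ) (hp : ∀ a, 0 ≤ p a) (hp1 : ∑ a, p a = 1) {C : ℝ}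
    (hh : ∀ a, |h a| ≤ C) : |∑ a, p a * h a| ≤ C := by
  calc |∑ a, p a * h a| ≤ ∑ a, |p a * h a| := Finset.abs_sum_le_sum_abs _ _
    _ ≤ ∑ a, p a * C := by
        apply Finset.sum_le_sum
        intro a _
        rw [abs_mul, abs_of_nonneg (hp a)]
        exact mul_le_mul_of_nonneg_left (hh a) (hp a)
    _ = C := by rw [← Finset.sum_mul, hp1, one_mul]

lemma myWsum_le_sup' (p h : A → ℝ) (hp : ∀ a, 0 ≤ p a) (hp1 : ∑ a, p a = 1) :
    ∑ a, p a * h a ≤ univ.sup' univ_nonempty h := by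
  calc ∑ a, p a * h a ≤ ∑ a, p a * univ.sup' univ_nonempty h := by
        apply Finset.sum_le_sum
        intro a _
        exact mul_le_mul_of_nonneg_left (Finset.le_sup' h (mem_univ a)) (hp a)
    _ = _ := by rw [← Finset.sum_mul, hp1, one_mul]

end helpers

section softmax
variable {X A : Type*} [Fintype A] [Nonempty A]
lemma softmax_denom_pos (η : ℝ) (Ψ : X → A → ℝ) (x : X) :
    0 < ∑ a', Real.exp (η * Ψ x a') :=
  Finset.sum_pos (fun _ _ => Real.exp_pos _) univ_nonempty

lemma softmax_nonneg (η : ℝ) (Ψ : X → A → ℝ) (x : X) (a : A) :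
    0 ≤ softmaxPol η Ψ x a :=
  div_nonneg (Real.exp_pos _).le (softmax_denom_pos η Ψ x).le

lemma softmax_sum_one (η : ℝ) (Ψ : X → A → ℝ) (x : X) :
    ∑ a, softmaxPol η Ψ x a = 1 := by
  unfold softmaxPol
  rw [← Finset.sum_div]
  exact div_self (softmax_denom_pos η Ψ x).ne'

lemma softmax_le_exp (η : ℝ) (Ψ : X → A → ℝ) (x : X) (a b : A) :
    softmaxPol η Ψ x a ≤ Real.exp (η * (Ψ x a - Ψ x b)) := by
  unfold softmaxPol
  rw [div_le_iff₀ (softmax_denom_pos η Ψ x), mul_sub, Real.exp_sub, div_mul_eq_mul_div,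
    le_div_iff₀ (Real.exp_pos _)]
  have hb : Real.exp (η * Ψ x b) ≤ ∑ a', Real.exp (η * Ψ x a') :=
    Finset.single_le_sum (f := fun a' => Real.exp (η * Ψ x a'))
      (fun a' _ => (Real.exp_pos _).le) (mem_univ b)
  nlinarith [Real.exp_pos (η * Ψ x a), Real.exp_pos (η * Ψ x b)]

lemma neg_inv_le_mul_exp {η t : ℝ} (hη : 0 < η) (ht : t ≤ 0) :
    -(1/η) ≤ t * Real.exp (η * t) := by
  rcases eq_or_lt_of_le ht with h | h
  · rw [h]; simp; positivity
  · have hE : Real.exp (η * t) = (Real.exp (η * (-t)))⁻¹ := by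
      rw [← Real.exp_neg]; ring_nf
    rw [hE]
    have h1 : η * (-t) ≤ Real.exp (η * (-t)) := by
      nlinarith [Real.add_one_le_exp (η * (-t))]
    have h2 : (0:ℝ) < Real.exp (η * (-t)) := Real.exp_pos _
    rw [neg_le, ← neg_mul, mul_inv_le_iff₀ h2, one_div, inv_mul_eq_div, le_div_iff₀ hη]
    nlinarith

lemma softmax_gap_lower (η : ℝ) (hη : 0 < η) (Ψ : X → A → ℝ) (x : X) :
    univ.sup' univ_nonempty (Ψ x) - (Fintype.card A : ℝ) / η ≤
      polApply (softmaxPol η Ψ) Ψ x := by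
  set m := univ.sup' univ_nonempty (Ψ x) with hm
  set S := ∑ a, Real.exp (η * (Ψ x a - m)) with hS
  have hSpos : 0 < S := Finset.sum_pos (fun _ _ => Real.exp_pos _) univ_nonempty
  have hS1 : (1:ℝ) ≤ S := by
    obtain ⟨a0, -, ha0⟩ := Finset.exists_mem_eq_sup' (univ_nonempty (α := A)) (Ψ x)
    calc (1:ℝ) = Real.exp (η * (Ψ x a0 - m)) := by rw [hm, ← ha0]; simp
      _ ≤ S := Finset.single_le_sum (f := fun a => Real.exp (η * (Ψ x a - m)))
          (fun a _ => (Real.exp_pos _).le) (mem_univ a0)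
  have hpol : ∀ a, softmaxPol η Ψ x a = Real.exp (η * (Ψ x a - m)) / S := by
    intro a
    unfold softmaxPol
    have h1 : ∀ b, Real.exp (η * Ψ x b) = Real.exp (η * (Ψ x b - m)) * Real.exp (η * m) := by
      intro b; rw [← Real.exp_add]; ring_nf
    rw [h1]
    have h2 : ∑ a', Real.exp (η * Ψ x a') = S * Real.exp (η * m) := by
      rw [hS, Finset.sum_mul]
      exact Finset.sum_congr rfl (fun b _ => h1 b)
    rw [h2, mul_div_mul_right _ _ (Real.exp_ne_zero _)]
  have hnum : (Fintype.card A : ℝ) * (-(1/η)) ≤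
      ∑ a, (Ψ x a - m) * Real.exp (η * (Ψ x a - m)) := by
    calc (Fintype.card A : ℝ) * (-(1/η)) = ∑ _a : A, -(1/η) := by
          rw [Finset.sum_const, card_univ, nsmul_eq_mul]
      _ ≤ _ := Finset.sum_le_sum (fun a _ => by
          apply neg_inv_le_mul_exp hη
          have := Finset.le_sup' (Ψ x) (mem_univ a)
          rw [← hm] at this; linarith)
  have key : polApply (softmaxPol η Ψ) Ψ x - m =
      (∑ a, (Ψ x a - m) * Real.exp (η * (Ψ x a - m))) / S := by
    unfold polApply
    rw [Finset.sum_div]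
    have : ∀ a, softmaxPol η Ψ x a * Ψ x a =
        (Ψ x a - m) * Real.exp (η * (Ψ x a - m)) / S + softmaxPol η Ψ x a * m := by
      intro a
      rw [hpol a]
      field_simp
      ring
    rw [Finset.sum_congr rfl (fun a _ => this a), Finset.sum_add_distrib,
      ← Finset.sum_mul, softmax_sum_one, one_mul]
    ring
  have hfin : -(((Fintype.card A : ℝ)) / η) ≤
      (∑ a, (Ψ x a - m) * Real.exp (η * (Ψ x a - m))) / S := by
    have hc : (0:ℝ) ≤ (Fintype.card A : ℝ) / η := by positivity
    rw [le_div_iff₀ hSpos]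
    have hnum' : -((Fintype.card A : ℝ) / η) ≤
        ∑ a, (Ψ x a - m) * Real.exp (η * (Ψ x a - m)) := by
      have h4 : (Fintype.card A : ℝ) * (-(1/η)) = -((Fintype.card A : ℝ) / η) := by ring
      linarith [h4 ▸ hnum]
    nlinarith
  linarith [key ▸ hfin]

lemma softmax_gap_upper (η : ℝ) (Ψ : X → A → ℝ) (x : X) :
    polApply (softmaxPol η Ψ) Ψ x ≤ univ.sup' univ_nonempty (Ψ x) := by
  unfold polApply
  calc ∑ a, softmaxPol η Ψ x a * Ψ x a
      ≤ ∑ a, softmaxPol η Ψ x a * univ.sup' univ_nonempty (Ψ x) := by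
        apply Finset.sum_le_sum
        intro a _
        exact mul_le_mul_of_nonneg_left (Finset.le_sup' (Ψ x) (mem_univ a))
          (softmax_nonneg η Ψ x a)
    _ = _ := by rw [← Finset.sum_mul, softmax_sum_one, one_mul]
end softmax

lemma aux_contract {γ : ℝ} (hγ0 : 0 ≤ γ) (hγ1 : γ < 1) (d b : ℕ → ℝ)
    (hd : ∀ k, 0 ≤ d k) (hrec : ∀ k, d (k + 1) ≤ γ * d k + b k)
    (hb : Tendsto b atTop (𝓝 0)) : Tendsto d atTop (𝓝 0) := by
  rw [Metric.tendsto_atTop]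
  intro ε hε
  have hε2 : 0 < ε * (1 - γ) / 2 := by nlinarith
  obtain ⟨K, hK⟩ := (Metric.tendsto_atTop.1 hb) (ε * (1 - γ) / 2) hε2
  have hbK : ∀ k ≥ K, b k ≤ ε * (1 - γ) / 2 := by
    intro k hk
    have := hK k hk
    rw [Real.dist_eq, sub_zero] at this
    exact (abs_le.1 this.le).2
  have key : ∀ n, d (K + n) ≤ γ ^ n * d K + ε / 2 := by
    intro n
    induction n with
    | zero => simp [hd K, le_add_of_nonneg_right, le_of_lt, hε]
    | succ n ih =>
      have h1 : d (K + n + 1) ≤ γ * d (K + n) + b (K + n) := hrec _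
      have h2 : b (K + n) ≤ ε * (1 - γ) / 2 := hbK _ (Nat.le_add_right _ _)
      have h3 : γ * (γ ^ n * d K + ε / 2) = γ ^ (n + 1) * d K + γ * ε / 2 := by ring
      have : K + (n + 1) = K + n + 1 := by ring
      rw [this]
      calc d (K + n + 1) ≤ γ * d (K + n) + b (K + n) := h1
        _ ≤ γ * (γ ^ n * d K + ε / 2) + ε * (1 - γ) / 2 := by
            have := mul_le_mul_of_nonneg_left ih hγ0; linarith
        _ ≤ γ ^ (n + 1) * d K + ε / 2 := by rw [h3] at *; nlinarith
  have hpow : Tendsto (fun n : ℕ => γ ^ n * d K) atTop (𝓝 0) := by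
    have := tendsto_pow_atTop_nhds_zero_of_lt_one hγ0 hγ1
    simpa using this.mul_const (d K)
  obtain ⟨N, hN⟩ := (Metric.tendsto_atTop.1 hpow) (ε / 2) (by positivity)
  refine ⟨K + N, fun k hk => ?_⟩
  have hkK : K ≤ k := le_trans (Nat.le_add_right _ _) hk
  have : d k ≤ γ ^ (k - K) * d K + ε / 2 := by
    have := key (k - K)
    rwa [Nat.add_sub_cancel' hkK] at this
  have hNk : N ≤ k - K := by omega
  have := hN (k - K) hNk
  rw [Real.dist_eq, sub_zero] at this ⊢
  have h5 : γ ^ (k - K) * d K < ε / 2 := lt_of_abs_lt this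
  rw [abs_of_nonneg (hd k)]
  linarith

lemma sup'_tendsto_zero {ι : Type*} [Fintype ι] [Nonempty ι] (f : ℕ → ι → ℝ)
    (h0 : ∀ k i, 0 ≤ f k i) (h : ∀ i, Tendsto (fun k => f k i) atTop (𝓝 0)) :
    Tendsto (fun k => Finset.univ.sup' Finset.univ_nonempty (f k)) atTop (𝓝 0) := by
  have hsum : Tendsto (fun k => ∑ i, f k i) atTop (𝓝 0) := by
    have := tendsto_finset_sum (univ : Finset ι) (fun i _ => h i)
    simpa using this
  apply squeeze_zero (fun k => ?_) (fun k => ?_) hsum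
  · obtain ⟨i, -, hi⟩ := Finset.exists_mem_eq_sup' (univ_nonempty (α := ι)) (f k)
    rw [hi]; exact h0 k i
  · apply Finset.sup'_le
    intro i _
    exact Finset.single_le_sum (fun j _ => h0 k j) (mem_univ i)

section
variable {X A : Type*} [Fintype X] [Fintype A] [Nonempty X] [Nonempty A]

lemma bellman_eq (P : X → A → X → ℝ) (r : X → A → ℝ) (γ : ℝ) (pol : X → A → ℝ)
    (Q : X → A → ℝ) (x : X) (a : A) :
    bellman P r γ pol Q x a = r x a + γ * ∑ x', P x a x' * polApply pol Q x' := by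
  unfold bellman polApply
  congr 1
  congr 1
  apply Finset.sum_congr rfl
  intro x' _
  rw [Finset.mul_sum]
  apply Finset.sum_congr rfl
  intro a' _
  ring

lemma psi_formula (P : X → A → X → ℝ) (r : X → A → ℝ) (γ : ℝ) (η : ℝ)
    (e : ℕ → X → A → ℝ) (ψ : ℕ → X → A → ℝ)
    (pol : ℕ → X → A → ℝ) (hpol : ∀ k, pol k = softmaxPol η (ψ k))
    (hψ : ∀ k x a, ψ (k + 1) x a = ψ k x a + bellman P r γ (pol k) (ψ k) x a -
        polApply (pol k) (ψ k) x + e k x a) :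
    ∀ k x a, ψ (k + 1) x a = ψ 0 x a + ((k : ℝ) + 1) * r x a
      + γ * (∑ x', P x a x' * (∑ j ∈ range (k + 1), polApply (pol j) (ψ j) x'))
      - (∑ j ∈ range (k + 1), polApply (pol j) (ψ j) x)
      + (∑ j ∈ range (k + 1), e j x a) := by
  intro k
  induction k with
  | zero =>
    intro x a
    rw [hψ 0 x a, bellman_eq]
    simp only [zero_add, range_one, Finset.sum_singleton, Nat.cast_zero]
    push_cast
    ring
  | succ k ih =>
    intro x a
    rw [hψ (k+1) x a, bellman_eq, ih x a,
      Finset.sum_range_succ (fun j => polApply (pol j) (ψ j) x) (k+1),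
      Finset.sum_range_succ (fun j => e j x a) (k+1)]
    have hsplit : ∑ x', P x a x' * (∑ j ∈ range (k + 1 + 1), polApply (pol j) (ψ j) x') =
        (∑ x', P x a x' * (∑ j ∈ range (k + 1), polApply (pol j) (ψ j) x')) +
        ∑ x', P x a x' * polApply (pol (k+1)) (ψ (k+1)) x' := by
      rw [← Finset.sum_add_distrib]
      apply Finset.sum_congr rfl
      intro x' _
      rw [Finset.sum_range_succ]
      ring
    rw [hsplit]
    push_cast
    ring
end

set_option maxHeartbeats 1000000 in
lemma det_conv {X A : Type*} [Fintype X] [Fintype A] [Nonempty X] [Nonempty A]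
    (P : X → A → X → ℝ) (hP0 : ∀ x a x', 0 ≤ P x a x') (hP1 : ∀ x a, ∑ x', P x a x' = 1)
    (r : X → A → ℝ) (γ : ℝ) (hγ0 : 0 ≤ γ) (hγ1 : γ < 1) (η : ℝ) (hη : 0 < η)
    (e : ℕ → X → A → ℝ)
    (he : ∀ x a, Tendsto (fun n : ℕ => (∑ j ∈ Finset.range n, e j x a) / n) atTop (𝓝 0))
    (ψ : ℕ → X → A → ℝ)
    (pol : ℕ → X → A → ℝ) (hpol : ∀ k, pol k = softmaxPol η (ψ k))
    (hψ : ∀ k x a, ψ (k + 1) x a = ψ k x a + bellman P r γ (pol k) (ψ k) x a -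
        polApply (pol k) (ψ k) x + e k x a)
    (Qstar : X → A → ℝ) (hQstar : bellmanOpt P r γ Qstar = Qstar)
    (Qpi : ℕ → X → A → ℝ) (hQpi : ∀ k, bellman P r γ (pol k) (Qpi k) = Qpi k) :
    Tendsto (fun k => supNorm (fun x a => Qstar x a - Qpi k x a)) atTop (𝓝 0) := by
  -- policy is a probability distribution
  have hpolnn : ∀ k x a, 0 ≤ pol k x a := by
    intro k x a; rw [hpol]; exact softmax_nonneg η (ψ k) x a
  have hpolsum : ∀ k x, ∑ a, pol k x a = 1 := by
    intro k x; rw [hpol]; exact softmax_sum_one η (ψ k) x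
  -- abbreviations
  set V : ℕ → X → ℝ := fun j => polApply (pol j) (ψ j) with hV
  set W : ℕ → X → ℝ := fun k x => ∑ j ∈ Finset.range (k + 1), V j x with hW
  set u : ℕ → X → ℝ := fun k x => W k x / ((k : ℝ) + 1) with hu
  set EE : ℕ → X → A → ℝ := fun k x a => ∑ j ∈ Finset.range (k + 1), e j x a with hEE
  set Vst : X → ℝ := fun x => univ.sup' univ_nonempty (Qstar x) with hVst
  set Tst : (X → ℝ) → X → ℝ :=
    fun v x => univ.sup' univ_nonempty (fun a => r x a + γ * ∑ x', P x a x' * v x') with hTst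
  set cA : ℝ := (Fintype.card A : ℝ) / η with hcA
  set C0 : ℝ := supNorm (ψ 0) with hC0def
  set VstN : ℝ := univ.sup' univ_nonempty (fun x => |Vst x|) with hVstN
  set Eb : ℕ → ℝ := fun k => supNorm (fun x a => EE k x a / ((k : ℝ) + 1)) with hEbdef
  set d : ℕ → ℝ := fun k => univ.sup' univ_nonempty (fun y => |u k y - Vst y|) with hd
  have hcA0 : 0 ≤ cA := by rw [hcA]; positivity
  have hsupN_le : ∀ (Q : X → A → ℝ) (c : ℝ), (∀ x a, |Q x a| ≤ c) → supNorm Q ≤ c := by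
    intro Q c h
    exact Finset.sup'_le _ _ (fun p _ => h p.1 p.2)
  have hle_supN : ∀ (Q : X → A → ℝ) x a, |Q x a| ≤ supNorm Q := by
    intro Q x a
    exact Finset.le_sup' (fun p : X × A => |Q p.1 p.2|) (mem_univ (x, a))
  have hsupN0 : ∀ Q : X → A → ℝ, 0 ≤ supNorm Q := by
    intro Q
    exact (abs_nonneg _).trans (hle_supN Q (Classical.arbitrary X) (Classical.arbitrary A))
  -- the Ψ formula
  have hψf : ∀ k x a, ψ (k + 1) x a = ψ 0 x a + ((k : ℝ) + 1) * r x a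
      + γ * (∑ x', P x a x' * W k x') - W k x + EE k x a :=
    psi_formula P r γ η e ψ pol hpol hψ
  -- basic facts about u and W
  have hk1pos : ∀ k : ℕ, (0:ℝ) < (k : ℝ) + 1 := by intro k; positivity
  have hup : ∀ (k : ℕ) (x' : X), ((k : ℝ) + 1) * u k x' = W k x' := by
    intro k x'
    rw [hu]
    field_simp
  have hPu : ∀ (k : ℕ) (x : X) (a : A), ((k : ℝ) + 1) * ∑ x', P x a x' * u k x' = ∑ x', P x a x' * W k x' := by
    intro k x a
    rw [Finset.mul_sum]
    exact Finset.sum_congr rfl (fun x' _ => by rw [← hup k x']; ring)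
  -- soft-max sandwiches V (k+1)
  have hVlb : ∀ k x, univ.sup' univ_nonempty (ψ (k+1) x) - cA ≤ V (k+1) x := by
    intro k x
    have := softmax_gap_lower η hη (ψ (k+1)) x
    rw [hV]; simp only [hpol (k+1)]
    exact this
  have hVub : ∀ k x, V (k+1) x ≤ univ.sup' univ_nonempty (ψ (k+1) x) := by
    intro k x
    have := softmax_gap_upper η (ψ (k+1)) x
    rw [hV]; simp only [hpol (k+1)]
    exact this
  -- the F function and sup' formula
  set F : ℕ → X → A → ℝ := fun k x a => ((k : ℝ) + 1) * r x a
      + γ * (∑ x', P x a x' * W k x') + ψ 0 x a + EE k x a with hF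
  have hsupψ : ∀ k x, univ.sup' univ_nonempty (ψ (k+1) x) =
      univ.sup' univ_nonempty (F k x) - W k x := by
    intro k x
    rw [← mySup'_sub_const (F k x) (W k x)]
    apply Finset.sup'_congr _ rfl
    intro a _
    rw [hψf k x a, hF]
    ring
  have hWrec : ∀ k x, W (k+1) x = W k x + V (k+1) x := by
    intro k x
    rw [hW]
    exact Finset.sum_range_succ _ _
  have hWF : ∀ k x, |W (k+1) x - univ.sup' univ_nonempty (F k x)| ≤ cA := by
    intro k x
    have h1 := hVlb k x
    have h2 := hVub k x
    rw [hsupψ k x] at h1 h2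
    rw [hWrec k x, abs_le]
    constructor <;> linarith
  -- compare F with the scaled optimality operator
  have hkey : ∀ k x, |W (k+1) x - ((k : ℝ) + 1) * Tst (u k) x| ≤
      cA + C0 + ((k : ℝ) + 1) * Eb k := by
    intro k x
    have h1 := hWF k x
    have h2 : |univ.sup' univ_nonempty (F k x) - ((k : ℝ) + 1) * Tst (u k) x| ≤
        C0 + ((k : ℝ) + 1) * Eb k := by
      have hGT : ((k : ℝ) + 1) * Tst (u k) x =
          univ.sup' univ_nonempty (fun a => ((k : ℝ) + 1) *
            (r x a + γ * ∑ x', P x a x' * u k x')) := by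
        rw [hTst, ← mySup'_mul _ (hk1pos k).le]
      rw [hGT]
      apply mySup'_abs_sub
      intro a
      have h3 : F k x a - ((k : ℝ) + 1) * (r x a + γ * ∑ x', P x a x' * u k x') =
          ψ 0 x a + EE k x a := by
        rw [hF, mul_add, mul_left_comm, hPu k x a]
        ring
      rw [h3]
      have h4 : |ψ 0 x a| ≤ C0 := hle_supN (ψ 0) x a
      have h5 : |EE k x a| ≤ ((k : ℝ) + 1) * Eb k := by
        have h6 : |EE k x a / ((k : ℝ) + 1)| ≤ Eb k := by
          rw [hEbdef]
          exact hle_supN (fun x a => EE k x a / ((k : ℝ) + 1)) x a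
        rw [abs_div, abs_of_pos (hk1pos k), div_le_iff₀ (hk1pos k)] at h6
        linarith [h6]
      calc |ψ 0 x a + EE k x a| ≤ |ψ 0 x a| + |EE k x a| := abs_add_le _ _
        _ ≤ C0 + ((k : ℝ) + 1) * Eb k := by linarith
    calc |W (k+1) x - ((k : ℝ) + 1) * Tst (u k) x| ≤
        |W (k+1) x - univ.sup' univ_nonempty (F k x)| +
        |univ.sup' univ_nonempty (F k x) - ((k : ℝ) + 1) * Tst (u k) x| := by
          have := abs_sub_le (W (k+1) x) (univ.sup' univ_nonempty (F k x))
            (((k : ℝ) + 1) * Tst (u k) x)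
          linarith
      _ ≤ cA + C0 + ((k : ℝ) + 1) * Eb k := by linarith
  -- contraction property of Tst
  have hTcontr : ∀ (v v' : X → ℝ) x, |Tst v x - Tst v' x| ≤
      γ * univ.sup' univ_nonempty (fun y => |v y - v' y|) := by
    intro v v' x
    rw [hTst]
    apply mySup'_abs_sub
    intro a
    have h1 : (r x a + γ * ∑ x', P x a x' * v x') - (r x a + γ * ∑ x', P x a x' * v' x') =
        γ * ∑ x', P x a x' * (v x' - v' x') := by
      have h2 : ∑ x', P x a x' * (v x' - v' x') =
          (∑ x', P x a x' * v x') - ∑ x', P x a x' * v' x' := by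
        rw [← Finset.sum_sub_distrib]
        exact Finset.sum_congr rfl (fun x' _ => by ring)
      rw [h2]; ring
    rw [h1, abs_mul, abs_of_nonneg hγ0]
    apply mul_le_mul_of_nonneg_left _ hγ0
    apply myWsum_abs_le (P x a) _ (hP0 x a) (hP1 x a)
    intro y
    exact Finset.le_sup' (fun y => |v y - v' y|) (mem_univ y)
  -- Tst fixes Vst
  have hTfix : ∀ x, Tst Vst x = Vst x := by
    intro x
    have h1 : (fun a => r x a + γ * ∑ x', P x a x' * Vst x') =
        fun a => bellmanOpt P r γ Qstar x a := rfl
    rw [hTst]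
    simp only [h1, hQstar]
    rfl
  -- nonnegativity facts
  have hEb0 : ∀ k, 0 ≤ Eb k := by
    intro k
    rw [hEbdef]
    exact hsupN0 _
  have hd0 : ∀ k, 0 ≤ d k := by
    intro k
    rw [hd]
    exact (abs_nonneg _).trans (Finset.le_sup' (fun y => |u k y - Vst y|)
      (mem_univ (Classical.arbitrary X)))
  have hdle : ∀ k y, |u k y - Vst y| ≤ d k := by
    intro k y
    rw [hd]
    exact Finset.le_sup' (fun y => |u k y - Vst y|) (mem_univ y)
  have hVstNle : ∀ x, |Vst x| ≤ VstN := by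
    intro x
    rw [hVstN]
    exact Finset.le_sup' (fun x => |Vst x|) (mem_univ x)
  -- the b sequence
  set b : ℕ → ℝ := fun k => (cA + C0 + VstN) / ((k : ℝ) + 2) + Eb k with hb
  -- recursion for d
  have hdrec : ∀ k, d (k + 1) ≤ γ * d k + b k := by
    intro k
    rw [hd]
    apply Finset.sup'_le
    intro x _
    have hk2 : (0:ℝ) < (k : ℝ) + 2 := by positivity
    have h1 : |u (k+1) x - Vst x| = |W (k+1) x - ((k : ℝ) + 2) * Vst x| / ((k : ℝ) + 2) := by
      have h2 : u (k+1) x = W (k+1) x / ((k : ℝ) + 2) := by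
        rw [hu]
        push_cast
        ring_nf
      rw [h2]
      rw [show W (k+1) x / ((k : ℝ) + 2) - Vst x =
        (W (k+1) x - ((k : ℝ) + 2) * Vst x) / ((k : ℝ) + 2) by field_simp]
      rw [abs_div, abs_of_pos hk2]
    have h3 : |W (k+1) x - ((k : ℝ) + 2) * Vst x| ≤
        cA + C0 + ((k : ℝ) + 1) * Eb k + ((k : ℝ) + 1) * (γ * d k) + VstN := by
      have h4 : W (k+1) x - ((k : ℝ) + 2) * Vst x =
          (W (k+1) x - ((k : ℝ) + 1) * Tst (u k) x) +
          ((k : ℝ) + 1) * (Tst (u k) x - Tst Vst x) - Vst x := by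
        rw [hTfix x]
        ring
      have h5 := hkey k x
      have h6 : |Tst (u k) x - Tst Vst x| ≤ γ * d k := hTcontr (u k) Vst x
      rw [h4]
      calc |W (k+1) x - ((k : ℝ) + 1) * Tst (u k) x +
            ((k : ℝ) + 1) * (Tst (u k) x - Tst Vst x) - Vst x|
          ≤ |W (k+1) x - ((k : ℝ) + 1) * Tst (u k) x +
            ((k : ℝ) + 1) * (Tst (u k) x - Tst Vst x)| + |Vst x| := abs_sub _ _
        _ ≤ |W (k+1) x - ((k : ℝ) + 1) * Tst (u k) x| +
            |((k : ℝ) + 1) * (Tst (u k) x - Tst Vst x)| + |Vst x| := by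
              linarith [abs_add_le (W (k+1) x - ((k : ℝ) + 1) * Tst (u k) x)
                (((k : ℝ) + 1) * (Tst (u k) x - Tst Vst x))]
        _ ≤ _ := by
              rw [abs_mul, abs_of_pos (hk1pos k)]
              have := mul_le_mul_of_nonneg_left h6 (hk1pos k).le
              have := hVstNle x
              linarith
    rw [h1, div_le_iff₀ hk2]
    have hbb : (γ * d k + b k) * ((k : ℝ) + 2) =
        γ * d k * ((k : ℝ) + 2) + (cA + C0 + VstN) + Eb k * ((k : ℝ) + 2) := by
      rw [hb]
      field_simp
      ring
    have hγd : 0 ≤ γ * d k := mul_nonneg hγ0 (hd0 k)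
    rw [hbb]
    nlinarith [hEb0 k, h3]
  have hEEc : ∀ x a, Tendsto (fun k : ℕ => EE k x a / ((k : ℝ) + 1)) atTop (𝓝 0) := by
    intro x a
    have h4 := (tendsto_add_atTop_iff_nat 1).mpr (he x a)
    rw [hEE]
    convert h4 using 2 with n
    norm_cast
  -- b tends to zero
  have hbtend : Tendsto b atTop (𝓝 0) := by
    rw [hb]
    have h1 : Tendsto (fun k : ℕ => (cA + C0 + VstN) / ((k : ℝ) + 2)) atTop (𝓝 0) := by
      apply Tendsto.div_atTop tendsto_const_nhds
      apply tendsto_atTop_add_const_right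
      exact tendsto_natCast_atTop_atTop
    have h2 : Tendsto Eb atTop (𝓝 0) := by
      rw [hEbdef]
      unfold supNorm
      apply sup'_tendsto_zero (f := fun k (p : X × A) => |EE k p.1 p.2 / ((k : ℝ) + 1)|)
      · intro k p
        exact abs_nonneg _
      · rintro ⟨x, a⟩
        have := (hEEc x a).abs
        simpa using this
    simpa using h1.add h2
  -- u converges to Vst
  have htend_d : Tendsto d atTop (𝓝 0) := aux_contract hγ0 hγ1 d b hd0 hdrec hbtend
  -- the estimated Q-values converge to Qstar
  have hQhat : ∀ x a, Tendsto (fun k => r x a + γ * ∑ x', P x a x' * u k x')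
      atTop (𝓝 (Qstar x a)) := by
    intro x a
    have h0 : Qstar x a = r x a + γ * ∑ x', P x a x' * Vst x' := by
      conv_lhs => rw [← hQstar]
      rfl
    have h1 : Tendsto (fun k => (r x a + γ * ∑ x', P x a x' * u k x') - Qstar x a)
        atTop (𝓝 0) := by
      apply squeeze_zero_norm (a := fun k => γ * d k)
      · intro k
        rw [h0]
        have h2 : (r x a + γ * ∑ x', P x a x' * u k x') -
            (r x a + γ * ∑ x', P x a x' * Vst x') =
            γ * ∑ x', P x a x' * (u k x' - Vst x') := by
          have h3 : ∑ x', P x a x' * (u k x' - Vst x') =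
              (∑ x', P x a x' * u k x') - ∑ x', P x a x' * Vst x' := by
            rw [← Finset.sum_sub_distrib]
            exact Finset.sum_congr rfl (fun x' _ => by ring)
          rw [h3]; ring
        rw [Real.norm_eq_abs, h2, abs_mul, abs_of_nonneg hγ0]
        apply mul_le_mul_of_nonneg_left _ hγ0
        apply myWsum_abs_le (P x a) _ (hP0 x a) (hP1 x a)
        intro y
        exact hdle k y
      · simpa using htend_d.const_mul γ
    have := h1.add_const (Qstar x a)
    simpa using this
  -- the soft-max policy concentrates on optimal actions
  have hpolconv : ∀ x a, Qstar x a < Vst x →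
      Tendsto (fun k => pol (k+1) x a) atTop (𝓝 0) := by
    intro x a hlt
    obtain ⟨astar, -, hastar⟩ := Finset.exists_mem_eq_sup' (univ_nonempty (α := A)) (Qstar x)
    have hVeq : Vst x = Qstar x astar := by rw [hVst]; exact hastar
    set gap : ℝ := Vst x - Qstar x a with hgapdef
    have hgap : 0 < gap := by rw [hgapdef]; linarith
    set q : ℕ → ℝ := fun k => (r x a + γ * ∑ x', P x a x' * u k x')
        - (r x astar + γ * ∑ x', P x astar x' * u k x')
        + (ψ 0 x a - ψ 0 x astar + EE k x a - EE k x astar) / ((k : ℝ) + 1) with hqdef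
    have hgk : ∀ k, ψ (k+1) x a - ψ (k+1) x astar = ((k : ℝ) + 1) * q k := by
      intro k
      have hq : ((k : ℝ) + 1) * q k = (((k : ℝ) + 1) * r x a
          + γ * ∑ x', P x a x' * W k x')
          - (((k : ℝ) + 1) * r x astar + γ * ∑ x', P x astar x' * W k x')
          + (ψ 0 x a - ψ 0 x astar + EE k x a - EE k x astar) := by
        rw [hqdef]
        simp only []
        rw [← hPu k x a, ← hPu k x astar]
        field_simp
      rw [hψf k x a, hψf k x astar, hq]
      ring
    have htq3 : Tendsto (fun k : ℕ =>
        (ψ 0 x a - ψ 0 x astar + EE k x a - EE k x astar) / ((k : ℝ) + 1))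
        atTop (𝓝 0) := by
      have hconst : Tendsto (fun k : ℕ => (ψ 0 x a - ψ 0 x astar) / ((k : ℝ) + 1))
          atTop (𝓝 0) := by
        apply Tendsto.div_atTop tendsto_const_nhds
        apply tendsto_atTop_add_const_right
        exact tendsto_natCast_atTop_atTop
      have hcomb := hconst.add ((hEEc x a).sub (hEEc x astar))
      have heq : ∀ k : ℕ, (ψ 0 x a - ψ 0 x astar + EE k x a - EE k x astar) / ((k : ℝ) + 1)
          = (ψ 0 x a - ψ 0 x astar) / ((k : ℝ) + 1)
            + (EE k x a / ((k : ℝ) + 1) - EE k x astar / ((k : ℝ) + 1)) := by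
        intro k
        field_simp
        ring
      simp only [heq]
      simpa using hcomb
    have htq : Tendsto q atTop (𝓝 (Qstar x a - Qstar x astar)) := by
      rw [hqdef]
      have := ((hQhat x a).sub (hQhat x astar)).add htq3
      simpa using this
    have hqev : ∀ᶠ k in atTop, q k ≤ -(gap / 2) := by
      have hlim : Qstar x a - Qstar x astar < -(gap / 2) := by
        rw [hgapdef, hVeq] at *
        linarith
      exact (htq.eventually_lt_const hlim).mono (fun k hk => hk.le)
    have hψbot : Tendsto (fun k => ψ (k+1) x a - ψ (k+1) x astar) atTop atBot := by
      apply tendsto_atBot_mono' atTop ?_ ?_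
      · exact fun k => ((k : ℝ) + 1) * (-(gap / 2))
      · filter_upwards [hqev] with k hk
        rw [hgk k]
        exact mul_le_mul_of_nonneg_left hk (hk1pos k).le
      · apply Tendsto.atTop_mul_const_of_neg (by linarith : -(gap / 2) < 0)
        apply tendsto_atTop_add_const_right
        exact tendsto_natCast_atTop_atTop
    apply squeeze_zero (fun k => hpolnn (k+1) x a) (g := fun k =>
      Real.exp (η * (ψ (k+1) x a - ψ (k+1) x astar)))
    · intro k
      rw [hpol (k+1)]
      exact softmax_le_exp η (ψ (k+1)) x a astar
    · exact Real.tendsto_exp_atBot.comp (hψbot.const_mul_atBot hη)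
  -- the soft-max policy value converges to the optimal value
  have hsx : ∀ x, Tendsto (fun k => Vst x - polApply (pol (k+1)) Qstar x) atTop (𝓝 0) := by
    intro x
    have hrw : ∀ k : ℕ, Vst x - polApply (pol (k+1)) Qstar x =
        ∑ a', pol (k+1) x a' * (Vst x - Qstar x a') := by
      intro k
      have h1 : ∑ a', pol (k+1) x a' * (Vst x - Qstar x a') =
          (∑ a', pol (k+1) x a' * Vst x) - ∑ a', pol (k+1) x a' * Qstar x a' := by
        rw [← Finset.sum_sub_distrib]
        exact Finset.sum_congr rfl (fun _ _ => by ring)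
      rw [h1, ← Finset.sum_mul, hpolsum, one_mul]
      rfl
    simp only [hrw]
    have hterm : ∀ a' : A, Tendsto (fun k => pol (k+1) x a' * (Vst x - Qstar x a'))
        atTop (𝓝 0) := by
      intro a'
      by_cases hc : Qstar x a' = Vst x
      · simp only [hc, sub_self, mul_zero]
        exact tendsto_const_nhds
      · have hle : Qstar x a' ≤ Vst x := by
          rw [hVst]
          exact Finset.le_sup' (Qstar x) (mem_univ a')
        have hlt : Qstar x a' < Vst x := lt_of_le_of_ne hle hc
        have := (hpolconv x a' hlt).mul_const (Vst x - Qstar x a')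
        simpa using this
    have := tendsto_finset_sum (univ : Finset A) (fun a' _ => hterm a')
    simpa using this
  set s : ℕ → ℝ := fun k =>
    univ.sup' univ_nonempty (fun x => Vst x - polApply (pol (k+1)) Qstar x) with hs
  have hs0 : ∀ k x, 0 ≤ Vst x - polApply (pol (k+1)) Qstar x := by
    intro k x
    have h1 : polApply (pol (k+1)) Qstar x ≤ Vst x := by
      rw [hVst]
      exact myWsum_le_sup' _ _ (fun a => hpolnn (k+1) x a) (hpolsum (k+1) x)
    linarith
  have hsle : ∀ k x, Vst x - polApply (pol (k+1)) Qstar x ≤ s k := by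
    intro k x
    rw [hs]
    exact Finset.le_sup' (fun x => Vst x - polApply (pol (k+1)) Qstar x) (mem_univ x)
  have hstend : Tendsto s atTop (𝓝 0) := by
    rw [hs]
    exact sup'_tendsto_zero _ (fun k x => hs0 k x) hsx
  have hsnn : ∀ k, 0 ≤ s k := fun k =>
    le_trans (hs0 k (Classical.arbitrary X)) (hsle k _)
  -- final bound
  set N : ℕ → ℝ := fun k => supNorm (fun x a => Qstar x a - Qpi k x a) with hN
  have hNb : ∀ k, N (k+1) ≤ γ * (s k + N (k+1)) := by
    intro k
    rw [hN]
    apply hsupN_le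
    intro x a
    have hA : Qstar x a = r x a + γ * ∑ x', P x a x' * Vst x' := by
      conv_lhs => rw [← hQstar]
      rfl
    have hB : Qpi (k+1) x a = r x a + γ * ∑ x', P x a x' *
        polApply (pol (k+1)) (Qpi (k+1)) x' := by
      conv_lhs => rw [← hQpi (k+1)]
      rw [bellman_eq]
    have h2 : ∑ x', P x a x' * (Vst x' - polApply (pol (k+1)) (Qpi (k+1)) x') =
        (∑ x', P x a x' * Vst x') - ∑ x', P x a x' *
          polApply (pol (k+1)) (Qpi (k+1)) x' := by
      rw [← Finset.sum_sub_distrib]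
      exact Finset.sum_congr rfl (fun _ _ => by ring)
    have h1 : Qstar x a - Qpi (k+1) x a =
        γ * ∑ x', P x a x' * (Vst x' - polApply (pol (k+1)) (Qpi (k+1)) x') := by
      rw [hA, hB, h2]
      ring
    rw [h1, abs_mul, abs_of_nonneg hγ0]
    apply mul_le_mul_of_nonneg_left _ hγ0
    apply myWsum_abs_le (P x a) _ (hP0 x a) (hP1 x a)
    intro y
    have hsplit : Vst y - polApply (pol (k+1)) (Qpi (k+1)) y =
        (Vst y - polApply (pol (k+1)) Qstar y) +
        ∑ a', pol (k+1) y a' * (Qstar y a' - Qpi (k+1) y a') := by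
      have h3 : ∑ a', pol (k+1) y a' * (Qstar y a' - Qpi (k+1) y a') =
          (∑ a', pol (k+1) y a' * Qstar y a') -
          ∑ a', pol (k+1) y a' * Qpi (k+1) y a' := by
        rw [← Finset.sum_sub_distrib]
        exact Finset.sum_congr rfl (fun _ _ => by ring)
      unfold polApply
      rw [h3]
      ring
    rw [hsplit]
    have t1 : |Vst y - polApply (pol (k+1)) Qstar y| ≤ s k := by
      rw [abs_of_nonneg (hs0 k y)]
      exact hsle k y
    have t2 : |∑ a', pol (k+1) y a' * (Qstar y a' - Qpi (k+1) y a')| ≤ N (k+1) := by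
      apply myWsum_abs_le _ _ (hpolnn (k+1) y) (hpolsum (k+1) y)
      intro a'
      exact hle_supN (fun x a => Qstar x a - Qpi (k+1) x a) y a'
    calc |(Vst y - polApply (pol (k+1)) Qstar y) +
          ∑ a', pol (k+1) y a' * (Qstar y a' - Qpi (k+1) y a')|
        ≤ |Vst y - polApply (pol (k+1)) Qstar y| +
          |∑ a', pol (k+1) y a' * (Qstar y a' - Qpi (k+1) y a')| := abs_add_le _ _
      _ ≤ s k + N (k+1) := by linarith
  have hNfin : ∀ k, N (k+1) ≤ γ / (1-γ) * s k := by
    intro k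
    have h1 := hNb k
    rw [div_mul_eq_mul_div, le_div_iff₀ (by linarith : (0:ℝ) < 1 - γ)]
    nlinarith
  have hNtend : Tendsto (fun k => N (k+1)) atTop (𝓝 0) := by
    apply squeeze_zero (fun k => by rw [hN]; exact hsupN0 _) hNfin
    simpa using hstend.const_mul (γ / (1-γ))
  have hfinal := (tendsto_add_atTop_iff_nat 1).mp hNtend
  rw [hN] at hfinal
  exact hfinal

/-- Equation (14) of the paper: with i.i.d. zero-mean bounded errors, the approximate
DPP iteration converges almost surely to the optimal policy,
i.e. `limsup_k ‖Q* − Q^{π_k}‖ = 0` with probability 1. -/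
theorem approx_dpp_iid_noise_convergence
    {X A : Type*} [Fintype X] [Fintype A] [Nonempty X] [Nonempty A]
    {Ω : Type*} [MeasurableSpace Ω] (μ : MeasureTheory.Measure Ω)
    [MeasureTheory.IsProbabilityMeasure μ]
    (P : X → A → X → ℝ) (hP0 : ∀ x a x', 0 ≤ P x a x') (hP1 : ∀ x a, ∑ x', P x a x' = 1)
    (r : X → A → ℝ) (Rmax : ℝ) (hR : 0 < Rmax) (hr : ∀ x a, |r x a| ≤ Rmax)
    (γ : ℝ) (hγ0 : 0 ≤ γ) (hγ1 : γ < 1)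
    (Vmax : ℝ) (hV : Vmax = Rmax / (1 - γ))
    (η : ℝ) (hη : 0 < η)
    -- the i.i.d. zero-mean bounded random error functions
    (ε : ℕ → Ω → X → A → ℝ)
    (hεmeas : ∀ k, Measurable (ε k))
    (hεindep : ProbabilityTheory.iIndepFun ε μ)
    (hεident : ∀ k, MeasureTheory.Measure.map (ε k) μ = MeasureTheory.Measure.map (ε 0) μ)
    (hεmean : ∀ k x a, ∫ ω, ε k ω x a ∂μ = 0)
    (U : ℝ) (hU : 0 < U)
    (hεbdd : ∀ᵐ ω ∂μ, ∀ k x a, |ε k ω x a| ≤ U)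
    -- the random approximate DPP iterates
    (Ψ : ℕ → Ω → X → A → ℝ)
    (hΨ0 : ∀ ω, supNorm (Ψ 0 ω) ≤ Vmax) (hΨ0det : ∀ ω ω', Ψ 0 ω = Ψ 0 ω')
    (pol : ℕ → Ω → X → A → ℝ) (hpol : ∀ k ω, pol k ω = softmaxPol η (Ψ k ω))
    (hΨ : ∀ k ω x a, Ψ (k + 1) ω x a =
      Ψ k ω x a + bellman P r γ (pol k ω) (Ψ k ω) x a -
        polApply (pol k ω) (Ψ k ω) x + ε k ω x a)
    (Qstar : X → A → ℝ) (hQstar : bellmanOpt P r γ Qstar = Qstar)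
    (Qpi : ℕ → Ω → X → A → ℝ)
    (hQpi : ∀ k ω, bellman P r γ (pol k ω) (Qpi k ω) = Qpi k ω) :
    μ {ω | Filter.limsup
        (fun k => supNorm (fun x a => Qstar x a - Qpi k ω x a)) Filter.atTop = 0} = 1 := by
  -- almost surely, all coordinate error averages tend to zero
  have hcoord : ∀ᵐ ω ∂μ, ∀ (p : X × A), Filter.Tendsto
      (fun n : ℕ => (∑ j ∈ Finset.range n, ε j ω p.1 p.2) / n) Filter.atTop (𝓝 0) := by
    rw [MeasureTheory.ae_all_iff]
    rintro ⟨x, a⟩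
    have hφ : Measurable (fun f : X → A → ℝ => f x a) :=
      (measurable_pi_apply a).comp (measurable_pi_apply x)
    set Y : ℕ → Ω → ℝ := fun k ω => ε k ω x a with hY
    have hYmeas : ∀ k, Measurable (Y k) := fun k => hφ.comp (hεmeas k)
    have hint : MeasureTheory.Integrable (Y 0) μ := by
      refine ⟨(hYmeas 0).aestronglyMeasurable, ?_⟩
      apply MeasureTheory.HasFiniteIntegral.of_bounded (C := U)
      exact hεbdd.mono fun ω h => by rw [Real.norm_eq_abs]; exact h 0 x a
    have hident : ∀ i, ProbabilityTheory.IdentDistrib (Y i) (Y 0) μ μ := by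
      intro i
      refine ⟨(hYmeas i).aemeasurable, (hYmeas 0).aemeasurable, ?_⟩
      calc MeasureTheory.Measure.map (Y i) μ
          = MeasureTheory.Measure.map (fun f : X → A → ℝ => f x a)
              (MeasureTheory.Measure.map (ε i) μ) :=
            (MeasureTheory.Measure.map_map hφ (hεmeas i)).symm
        _ = MeasureTheory.Measure.map (fun f : X → A → ℝ => f x a)
              (MeasureTheory.Measure.map (ε 0) μ) := by rw [hεident i]
        _ = MeasureTheory.Measure.map (Y 0) μ :=
            MeasureTheory.Measure.map_map hφ (hεmeas 0)
    have hindep : Pairwise (Function.onFun (ProbabilityTheory.IndepFun · · μ) Y) := by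
      intro i j hij
      exact (hεindep.indepFun hij).comp hφ hφ
    have hSLLN := ProbabilityTheory.strong_law_ae_real Y hint hindep hident
    have hmean0 : (∫ ω, Y 0 ω ∂μ) = 0 := hεmean 0 x a
    rw [hmean0] at hSLLN
    exact hSLLN
  -- on that full-measure set, the deterministic convergence applies
  have hfull : ∀ᵐ ω ∂μ, Filter.limsup
      (fun k => supNorm (fun x a => Qstar x a - Qpi k ω x a)) Filter.atTop = 0 := by
    filter_upwards [hcoord] with ω hω
    have htend := det_conv P hP0 hP1 r γ hγ0 hγ1 η hη (fun k => ε k ω)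
      (fun x a => hω (x, a)) (fun k => Ψ k ω) (fun k => pol k ω) (fun k => hpol k ω)
      (fun k x a => hΨ k ω x a) Qstar hQstar (fun k => Qpi k ω) (fun k => hQpi k ω)
    exact htend.limsup_eq
  -- conclude that the event has probability one
  set S : Set Ω := {ω | Filter.limsup
      (fun k => supNorm (fun x a => Qstar x a - Qpi k ω x a)) Filter.atTop = 0} with hS
  have hSc : μ Sᶜ = 0 := by
    rw [MeasureTheory.ae_iff] at hfull
    exact hfull
  apply le_antisymm (MeasureTheory.prob_le_one)
  calc (1 : ENNReal) = μ Set.univ := (MeasureTheory.measure_univ).symm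
    _ ≤ μ S + μ Sᶜ := by
        rw [← Set.union_compl_self S]
        exact MeasureTheory.measure_union_le S Sᶜ
    _ = μ S := by rw [hSc, add_zero]
end
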